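/- For every complex number z not in ℤ, the limit as N → ∞ of the symmetric partial sums ∑_{k=-N}^{N} 1/(z+k) equals π·cot(πz). -/

import Mathlib

open Complex Filter Finset

noncomputable def Pprod (N : ℕ) (z : ℂ) : ℂ :=
  ↑Real.pi * z * ∏ i ∈ Finset.range N, (1 - z ^ 2 / ((i : ℂ) + 1) ^ 2)

lemma Pprod_diff (N : ℕ) : Differentiable ℂ (Pprod N) := by
  unfold Pprod
  apply Differentiable.mul (by fun_prop)
  apply Differentiable.fun_finsetProd
  intro i _
  fun_prop

lemma symm_sum_eq (z : ℂ) (N : ℕ) :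
    ∑ k ∈ Finset.Icc (-(N : ℤ)) (N : ℤ), 1 / (z + (k : ℂ))
      = 1 / z + ∑ i ∈ Finset.range N, (1 / (z - ((i : ℂ) + 1)) + 1 / (z + ((i : ℂ) + 1))) := by
  induction N with
  | zero => simp
  | succ n ih =>
    have h1 : Finset.Icc (-(n + 1 : ℤ)) (n + 1 : ℤ)
        = insert (-(n + 1 : ℤ)) (insert ((n + 1 : ℤ)) (Finset.Icc (-(n : ℤ)) (n : ℤ))) := by
      ext k; simp; omega
    push_cast
    rw [h1, Finset.sum_insert (by simp; omega), Finset.sum_insert (by simp), ih,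
      Finset.sum_range_succ]
    push_cast
    ring

lemma factor_ne_zero {z : ℂ} (i : ℕ) (h1 : z - ((i : ℂ) + 1) ≠ 0) (h2 : z + ((i : ℂ) + 1) ≠ 0) :
    (1 : ℂ) - z ^ 2 / ((i : ℂ) + 1) ^ 2 ≠ 0 := by
  have hi : ((i : ℂ) + 1) ≠ 0 := Nat.cast_add_one_ne_zero i
  intro h
  have h' : z ^ 2 = ((i : ℂ) + 1) ^ 2 := by
    field_simp at h
    linear_combination -h
  have : (z - ((i : ℂ) + 1)) * (z + ((i : ℂ) + 1)) = 0 := by linear_combination h'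
  rcases mul_eq_zero.mp this with h | h
  · exact h1 h
  · exact h2 h

lemma logDeriv_factor {z : ℂ} (i : ℕ) (h1 : z - ((i : ℂ) + 1) ≠ 0) (h2 : z + ((i : ℂ) + 1) ≠ 0) :
    logDeriv (fun w => 1 - w ^ 2 / ((i : ℂ) + 1) ^ 2) z
      = 1 / (z - ((i : ℂ) + 1)) + 1 / (z + ((i : ℂ) + 1)) := by
  have hi : ((i : ℂ) + 1) ≠ 0 := Nat.cast_add_one_ne_zero i
  have hval := factor_ne_zero i h1 h2
  have hd : HasDerivAt (fun w : ℂ => 1 - w ^ 2 / ((i : ℂ) + 1) ^ 2)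
      (-(2 * z / ((i : ℂ) + 1) ^ 2)) z := by
    have := ((hasDerivAt_pow 2 z).div_const (((i : ℂ) + 1) ^ 2)).const_sub 1
    simpa using this
  rw [logDeriv_apply, hd.deriv, div_add_div _ _ h1 h2,
    div_eq_div_iff hval (mul_ne_zero h1 h2)]
  field_simp
  ring

lemma logDeriv_Pprod (z : ℂ) (hz : ∀ k : ℤ, z ≠ (k : ℂ)) (N : ℕ) :
    logDeriv (Pprod N) z = ∑ k ∈ Finset.Icc (-(N : ℤ)) (N : ℤ), 1 / (z + (k : ℂ)) := by
  have hz0 : z ≠ 0 := by simpa using hz 0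
  have hsub : ∀ i : ℕ, z - ((i : ℂ) + 1) ≠ 0 := by
    intro i h
    apply hz (i + 1)
    push_cast
    linear_combination h
  have hadd : ∀ i : ℕ, z + ((i : ℂ) + 1) ≠ 0 := by
    intro i h
    apply hz (-(i + 1))
    push_cast
    linear_combination h
  have hpi : (Real.pi : ℂ) ≠ 0 := by exact_mod_cast Real.pi_ne_zero
  rw [symm_sum_eq z N]
  unfold Pprod
  rw [logDeriv_mul z (mul_ne_zero hpi hz0)
    (Finset.prod_ne_zero_iff.mpr fun i _ => factor_ne_zero i (hsub i) (hadd i))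
    (by fun_prop) (by apply DifferentiableAt.fun_finsetProd; intro i _; fun_prop)]
  rw [logDeriv_const_mul z _ hpi, logDeriv_id',
    logDeriv_prod (s := range N) (f := fun i w => 1 - w ^ 2 / ((i : ℂ) + 1) ^ 2) (x := z) (fun i _ => factor_ne_zero i (hsub i) (hadd i)) (fun i _ => by fun_prop)]
  congr 1
  exact Finset.sum_congr rfl fun i _ => logDeriv_factor i (hsub i) (hadd i)

lemma exp_dist_bound {C : ℝ} {a b : ℂ} (ha : ‖a‖ ≤ C) (hab : ‖b - a‖ ≤ 1) :
    ‖Complex.exp b - Complex.exp a‖ ≤ Real.exp C * (2 * ‖b - a‖) := by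
  have h1 : Complex.exp b - Complex.exp a = Complex.exp a * (Complex.exp (b - a) - 1) := by
    rw [mul_sub, ← Complex.exp_add, mul_one]
    ring_nf
  rw [h1, norm_mul]
  have h2 : ‖Complex.exp a‖ ≤ Real.exp C := by
    rw [Complex.norm_exp]
    exact Real.exp_le_exp.mpr ((Complex.re_le_norm a).trans ha)
  have h3 : ‖Complex.exp (b - a) - 1‖ ≤ 2 * ‖b - a‖ := Complex.norm_exp_sub_one_le hab
  exact mul_le_mul h2 h3 (norm_nonneg _) (Real.exp_pos C).le

set_option maxHeartbeats 2000000 in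
lemma tendstoUniformlyOn_Pprod {R : ℝ} (hR : 1 ≤ R) :
    TendstoUniformlyOn Pprod (fun z => Complex.sin (↑Real.pi * z)) atTop
      (Metric.ball (0 : ℂ) R) := by
  classical
  have hR0 : (0 : ℝ) < R := lt_of_lt_of_le one_pos hR
  set M : ℕ := ⌈2 * R⌉₊ with hMdef
  have hM : 2 * R ≤ (M : ℝ) := Nat.le_ceil _
  set L : ℕ → ℂ → ℂ := fun i z => Complex.log (1 - z ^ 2 / (((M + i : ℕ) : ℂ) + 1) ^ 2) with hL
  set u : ℕ → ℝ := fun i => (3 / 2) * (R ^ 2 / (((M + i : ℕ) : ℝ) + 1) ^ 2) with hu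
  have hnorm : ∀ (j : ℕ) (z : ℂ), ‖z ^ 2 / ((j : ℂ) + 1) ^ 2‖ = ‖z‖ ^ 2 / ((j : ℝ) + 1) ^ 2 := by
    intro j z
    rw [norm_div, norm_pow, norm_pow]
    congr 2
    have h : ((j : ℂ) + 1) = ((j + 1 : ℕ) : ℂ) := by push_cast; ring
    rw [h, Complex.norm_natCast]
    push_cast; ring
  have hterm_le : ∀ (i : ℕ) (z : ℂ), z ∈ Metric.ball (0 : ℂ) R →
      ‖z ^ 2 / (((M + i : ℕ) : ℂ) + 1) ^ 2‖ ≤ R ^ 2 / (((M + i : ℕ) : ℝ) + 1) ^ 2 := by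
    intro i z hz
    rw [hnorm]
    have hzR : ‖z‖ ≤ R := (mem_ball_zero_iff.mp hz).le
    gcongr
  have hquarter : ∀ (i : ℕ) (z : ℂ), z ∈ Metric.ball (0 : ℂ) R →
      ‖z ^ 2 / (((M + i : ℕ) : ℂ) + 1) ^ 2‖ ≤ 1 / 4 := by
    intro i z hz
    refine (hterm_le i z hz).trans ?_
    have h1 : 2 * R ≤ ((M + i : ℕ) : ℝ) + 1 := by
      push_cast
      linarith [Nat.cast_nonneg (α := ℝ) i]
    have h2 : R ^ 2 / (((M + i : ℕ) : ℝ) + 1) ^ 2 ≤ R ^ 2 / (2 * R) ^ 2 := by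
      gcongr
    refine h2.trans (le_of_eq ?_)
    field_simp
    ring
  have hfac_ne : ∀ (i : ℕ) (z : ℂ), z ∈ Metric.ball (0 : ℂ) R →
      (1 : ℂ) - z ^ 2 / (((M + i : ℕ) : ℂ) + 1) ^ 2 ≠ 0 := by
    intro i z hz h
    have hw := hquarter i z hz
    have h1 : z ^ 2 / (((M + i : ℕ) : ℂ) + 1) ^ 2 = 1 := by linear_combination -h
    rw [h1] at hw
    norm_num at hw
  have hu_sum : Summable u := by
    have h0 : Summable (fun n : ℕ => 1 / ((n : ℝ)) ^ 2) :=
      Real.summable_one_div_nat_pow.mpr one_lt_two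
    have h1 : Summable (fun i : ℕ => 1 / ((i + (M + 1) : ℕ) : ℝ) ^ 2) :=
      (summable_nat_add_iff (M + 1)).mpr h0
    have h2 : u = fun i : ℕ => ((3 / 2) * R ^ 2) * (1 / ((i + (M + 1) : ℕ) : ℝ) ^ 2) := by
      funext i; simp only [hu]; push_cast; ring
    rw [h2]
    exact h1.mul_left _
  have hu_nonneg : ∀ i, 0 ≤ u i := by
    intro i; simp only [hu]; positivity
  have hLbound : ∀ (i : ℕ) (z : ℂ), z ∈ Metric.ball (0 : ℂ) R → ‖L i z‖ ≤ u i := by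
    intro i z hz
    simp only [hL]
    have h1 : (1 : ℂ) - z ^ 2 / (((M + i : ℕ) : ℂ) + 1) ^ 2
        = 1 + -(z ^ 2 / (((M + i : ℕ) : ℂ) + 1) ^ 2) := by ring
    rw [h1]
    have h2 : ‖-(z ^ 2 / (((M + i : ℕ) : ℂ) + 1) ^ 2)‖ ≤ 1 / 2 := by
      rw [norm_neg]
      exact (hquarter i z hz).trans (by norm_num)
    refine (Complex.norm_log_one_add_half_le_self h2).trans ?_
    rw [norm_neg, hu]
    have := hterm_le i z hz
    linarith
  have hS := tendstoUniformlyOn_tsum_nat hu_sum hLbound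
  set C : ℝ := ∑' i, u i with hC
  have hCsum : ∀ (N : ℕ) (z : ℂ), z ∈ Metric.ball (0 : ℂ) R →
      ‖∑ i ∈ range N, L i z‖ ≤ C := by
    intro N z hz
    refine (norm_sum_le _ _).trans ?_
    refine (Finset.sum_le_sum fun i _ => hLbound i z hz).trans ?_
    exact Summable.sum_le_tsum _ (fun i _ => hu_nonneg i) hu_sum
  have hexp : TendstoUniformlyOn (fun N z => Complex.exp (∑ i ∈ range N, L i z))
      (fun z => Complex.exp (∑' i, L i z)) atTop (Metric.ball (0 : ℂ) R) := by
    rw [Metric.tendstoUniformlyOn_iff] at hS ⊢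
    intro ε hε
    have hEC : (0 : ℝ) < 2 * Real.exp C + 1 := by positivity
    set δ := min 1 (ε / (2 * Real.exp C + 1)) with hδdef
    have hδ : 0 < δ := lt_min one_pos (by positivity)
    filter_upwards [hS δ hδ] with N hN z hzball
    have h1 : ‖(∑' i, L i z) - ∑ i ∈ range N, L i z‖ < δ := by
      have := hN z hzball; rwa [dist_eq_norm] at this
    rw [dist_eq_norm]
    calc ‖Complex.exp (∑' i, L i z) - Complex.exp (∑ i ∈ range N, L i z)‖
        ≤ Real.exp C * (2 * ‖(∑' i, L i z) - ∑ i ∈ range N, L i z‖) :=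
          exp_dist_bound (hCsum N z hzball) (h1.le.trans (min_le_left _ _))
      _ < Real.exp C * (2 * δ) := by
          have := Real.exp_pos C
          apply mul_lt_mul_of_pos_left (by linarith) this
      _ ≤ Real.exp C * (2 * (ε / (2 * Real.exp C + 1))) := by
          have h3 := min_le_right 1 (ε / (2 * Real.exp C + 1))
          have := Real.exp_pos C
          nlinarith
      _ = ε * ((2 * Real.exp C) / (2 * Real.exp C + 1)) := by ring
      _ < ε * 1 := by
          apply mul_lt_mul_of_pos_left _ hε
          rw [div_lt_one hEC]
          linarith [Real.exp_pos C]
      _ = ε := mul_one ε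
  have hprod_eq : ∀ (N : ℕ) (z : ℂ), z ∈ Metric.ball (0 : ℂ) R →
      ∏ i ∈ range N, ((1 : ℂ) - z ^ 2 / (((M + i : ℕ) : ℂ) + 1) ^ 2)
        = Complex.exp (∑ i ∈ range N, L i z) := by
    intro N z hz
    rw [Complex.exp_sum]
    refine Finset.prod_congr rfl fun i _ => ?_
    simp only [hL]
    exact (Complex.exp_log (hfac_ne i z hz)).symm
  have hcont : Continuous (Pprod M) := (Pprod_diff M).continuous
  obtain ⟨Cp, hCp⟩ :=
    (isCompact_closedBall (0 : ℂ) R).exists_bound_of_continuousOn hcont.continuousOn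
  have hfull : TendstoUniformlyOn (fun N z => Pprod (M + N) z)
      (fun z => Pprod M z * Complex.exp (∑' i, L i z)) atTop (Metric.ball (0 : ℂ) R) := by
    rw [Metric.tendstoUniformlyOn_iff] at hexp ⊢
    intro ε hε
    have hCp1 : (0 : ℝ) < Cp + 1 := by
      have : (0:ℝ) ≤ Cp := (norm_nonneg _).trans (hCp 0 (Metric.mem_closedBall_self hR0.le))
      linarith
    filter_upwards [hexp (ε / (Cp + 1)) (by positivity)] with N hN z hzb
    have hP : Pprod (M + N) z = Pprod M z * Complex.exp (∑ i ∈ range N, L i z) := by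
      unfold Pprod
      rw [Finset.prod_range_add, ← hprod_eq N z hzb]
      ring
    rw [hP, dist_eq_norm, ← mul_sub, norm_mul]
    have h1 : ‖Pprod M z‖ ≤ Cp := hCp z (Metric.ball_subset_closedBall hzb)
    have h2 : ‖Complex.exp (∑' i, L i z) - Complex.exp (∑ i ∈ range N, L i z)‖ < ε / (Cp + 1) := by
      have := hN z hzb; rwa [dist_eq_norm] at this
    calc ‖Pprod M z‖ * ‖Complex.exp (∑' i, L i z) - Complex.exp (∑ i ∈ range N, L i z)‖
        ≤ (Cp + 1) * ‖Complex.exp (∑' i, L i z) - Complex.exp (∑ i ∈ range N, L i z)‖ :=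
          mul_le_mul_of_nonneg_right (by linarith) (norm_nonneg _)
      _ < (Cp + 1) * (ε / (Cp + 1)) := mul_lt_mul_of_pos_left h2 hCp1
      _ = ε := mul_div_cancel₀ ε hCp1.ne'
  have hshift : TendstoUniformlyOn Pprod
      (fun z => Pprod M z * Complex.exp (∑' i, L i z)) atTop (Metric.ball (0 : ℂ) R) := by
    rw [Metric.tendstoUniformlyOn_iff] at hfull ⊢
    intro ε hε
    obtain ⟨N₀, hN₀⟩ := eventually_atTop.mp (hfull ε hε)
    refine eventually_atTop.mpr ⟨N₀ + M, fun N hN => ?_⟩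
    have h := hN₀ (N - M) (by omega)
    rw [show M + (N - M) = N from by omega] at h
    exact h
  refine hshift.congr_right fun z hz => ?_
  exact tendsto_nhds_unique (hshift.tendsto_at hz)
    (by simpa [Pprod] using Complex.tendsto_euler_sin_prod z)

set_option maxHeartbeats 1000000 in
/-- For every complex number `z` not in `ℤ`, the symmetric partial sums
`∑_{k=-N}^{N} 1/(z+k)` tend to `π · cot (π z)` as `N → ∞`. -/
theorem symmetric_sum_tendsto_pi_cot (z : ℂ) (hz : ∀ k : ℤ, z ≠ (k : ℂ)) :
    Tendsto (fun N : ℕ => ∑ k ∈ Finset.Icc (-(N : ℤ)) (N : ℤ), 1 / (z + (k : ℂ)))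
      atTop (nhds (↑Real.pi * Complex.cot (↑Real.pi * z))) := by
  have hpi : (Real.pi : ℂ) ≠ 0 := by exact_mod_cast Real.pi_ne_zero
  set R : ℝ := ‖z‖ + 1 with hRdef
  have hR : 1 ≤ R := by simp [hRdef]
  have hzb : z ∈ Metric.ball (0 : ℂ) R := by
    rw [mem_ball_zero_iff]
    simp [hRdef]
  have hsin : Complex.sin (↑Real.pi * z) ≠ 0 := by
    rw [Complex.sin_ne_zero_iff]
    intro k h
    apply hz k
    rw [mul_comm ((k : ℂ))] at h
    exact mul_left_cancel₀ hpi h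
  have hld : logDeriv (fun w => Complex.sin (↑Real.pi * w)) z
      = ↑Real.pi * Complex.cot (↑Real.pi * z) := by
    rw [logDeriv_apply]
    have hd : HasDerivAt (fun w : ℂ => Complex.sin (↑Real.pi * w))
        (Complex.cos (↑Real.pi * z) * ↑Real.pi) z := by
      have h1 : HasDerivAt (fun w : ℂ => (↑Real.pi : ℂ) * w) ((↑Real.pi : ℂ)) z := by
        simpa using (hasDerivAt_id z).const_mul ((Real.pi : ℂ))
      exact (Complex.hasDerivAt_sin _).comp z h1
    rw [hd.deriv, Complex.cot_eq_cos_div_sin]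
    field_simp
  have h : Tendsto (fun N : ℕ => logDeriv (Pprod N) z) atTop
      (nhds (logDeriv (fun w => Complex.sin (↑Real.pi * w)) z)) := by
    apply Complex.logDeriv_tendsto Metric.isOpen_ball hzb
    · exact (tendstoUniformlyOn_Pprod hR).tendstoLocallyUniformlyOn
    · exact Eventually.of_forall fun N => (Pprod_diff N).differentiableOn
    · exact hsin
  rw [hld] at h
  exact h.congr fun N => logDeriv_Pprod z hz N
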